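/- Let η : ℝ → ℝ be defined for 0 < r < π/2 by η(r) = c₁ · (1 − cos(r)^(2/3))^(1/2) · (cos(r)^(2/3) + cos(r)^(4/3) + 1)^(−1/4) · exp(−(√3/2) · arctan((2·cos(r)^(2/3) + 1)/√3)), where c₁ = 3^(3/4) · e^(π/(2√3)). Then (π/2 − r)^(1/3) · η'(r) → 3^(3/4) · e^(π/(4√3)) as r → (π/2)⁻; in particular η'(r) → +∞ as r → (π/2)⁻. -/

import Mathlib

/-- The constant `c₁ = 3^(3/4) e^(π/(2√3))` of Lemma 2.4 of Gilkey–Park. -/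
noncomputable def c₁ : ℝ := (3 : ℝ) ^ ((3 : ℝ) / 4) * Real.exp (Real.pi / (2 * Real.sqrt 3))

/-- The reparametrized radial distance function `η` of Lemma 2.4 of Gilkey–Park on `CP²`. -/
noncomputable def η (r : ℝ) : ℝ :=
  c₁ * (1 - Real.cos r ^ ((2 : ℝ) / 3)) ^ ((1 : ℝ) / 2)
    * (Real.cos r ^ ((2 : ℝ) / 3) + Real.cos r ^ ((4 : ℝ) / 3) + 1) ^ (-(1 : ℝ) / 4)
    * Real.exp (-(Real.sqrt 3 / 2)
        * Real.arctan ((2 * Real.cos r ^ ((2 : ℝ) / 3) + 1) / Real.sqrt 3))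

/-- The function `F` with `η r = c₁ * F (cos r ^ (2/3))`. -/
noncomputable def Faux (u : ℝ) : ℝ :=
  (1 - u) ^ ((1:ℝ)/2) * (u + u^2 + 1) ^ (-(1:ℝ)/4) *
    Real.exp (-(Real.sqrt 3 / 2) * Real.arctan ((2*u+1)/Real.sqrt 3))

lemma Faux_hasDerivAt {u : ℝ} (h1 : u < 1) :
    HasDerivAt Faux (Faux u * (-3 / (2 * (1 - u^3)))) u := by
  have hP : (0:ℝ) < 1 - u := by linarith
  have hQ : (0:ℝ) < u + u^2 + 1 := by nlinarith [sq_nonneg (2*u+1)]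
  have hs3 : (0:ℝ) < Real.sqrt 3 := Real.sqrt_pos.mpr (by norm_num)
  have hA : HasDerivAt (fun x : ℝ => (1-x)^((1:ℝ)/2))
      ((-1) * ((1:ℝ)/2) * (1-u)^((1:ℝ)/2 - 1)) u :=
    (((hasDerivAt_id u).const_sub 1).rpow_const (Or.inl hP.ne'))
  have hB0 : HasDerivAt (fun x : ℝ => x + x^2 + 1) (1 + 2*u) u := by
    have := ((hasDerivAt_id u).add (hasDerivAt_pow 2 u)).add_const 1
    simpa using this
  have hB : HasDerivAt (fun x : ℝ => (x + x^2 + 1)^(-(1:ℝ)/4))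
      ((1+2*u) * (-(1:ℝ)/4) * (u+u^2+1)^(-(1:ℝ)/4 - 1)) u :=
    hB0.rpow_const (Or.inl hQ.ne')
  have hg : HasDerivAt (fun x : ℝ => (2*x+1)/Real.sqrt 3) (2/Real.sqrt 3) u := by
    have := (((hasDerivAt_id u).const_mul 2).add_const 1).div_const (Real.sqrt 3)
    simpa using this
  have hC : HasDerivAt (fun x : ℝ =>
      Real.exp (-(Real.sqrt 3 / 2) * Real.arctan ((2*x+1)/Real.sqrt 3)))
      (Real.exp (-(Real.sqrt 3 / 2) * Real.arctan ((2*u+1)/Real.sqrt 3)) *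
        (-(Real.sqrt 3 / 2) * (1 / (1 + ((2*u+1)/Real.sqrt 3)^2) * (2/Real.sqrt 3)))) u :=
    ((hg.arctan).const_mul (-(Real.sqrt 3 / 2))).exp
  have hF := (hA.mul hB).mul hC
  refine hF.congr_deriv ?_
  have e1 : (1-u)^((1:ℝ)/2 - 1) = (1-u)^((1:ℝ)/2) / (1-u) := by
    rw [Real.rpow_sub hP, Real.rpow_one]
  have e2 : (u+u^2+1)^(-(1:ℝ)/4 - 1) = (u+u^2+1)^(-(1:ℝ)/4) / (u+u^2+1) := by
    rw [Real.rpow_sub hQ, Real.rpow_one]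
  have e3 : 1 + ((2*u+1)/Real.sqrt 3)^2 = (4*(u + u^2 + 1))/3 := by
    rw [div_pow, Real.sq_sqrt (by norm_num : (0:ℝ) ≤ 3)]; ring
  have e4 : -(Real.sqrt 3/2) * (1 / ((4*(u + u^2 + 1))/3) * (2/Real.sqrt 3))
      = -3/(4*(u+u^2+1)) := by
    field_simp
  have e5 : 1 - u^3 = (1-u)*(u+u^2+1) := by ring
  rw [e1, e2, e3, e4, e5]
  simp only [Faux, Pi.mul_apply]
  field_simp
  ring_nf
  have hQinv : (1+u+u^2) * (1+u+u^2)⁻¹ = 1 := mul_inv_cancel₀ (by nlinarith)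
  linear_combination (4 * (1+u+u^2)^(-(1:ℝ)/4)) * hQinv

lemma eta_eq {x : ℝ} (hx : 0 < Real.cos x) :
    η x = c₁ * Faux (Real.cos x ^ ((2:ℝ)/3)) := by
  have h43 : Real.cos x ^ ((4:ℝ)/3) = (Real.cos x ^ ((2:ℝ)/3))^2 := by
    rw [← Real.rpow_natCast (Real.cos x ^ ((2:ℝ)/3)) 2, ← Real.rpow_mul hx.le]
    norm_num
  simp only [η, Faux, h43]
  ring_nf

lemma eta_hasDerivAt {r : ℝ} (h0 : 0 < r) (h1 : r < Real.pi/2) :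
    HasDerivAt η (η r / (Real.sin r * Real.cos r ^ ((1:ℝ)/3))) r := by
  have hc : 0 < Real.cos r := Real.cos_pos_of_mem_Ioo ⟨by linarith [Real.pi_pos], h1⟩
  have hsin : 0 < Real.sin r := Real.sin_pos_of_pos_of_lt_pi h0 (by linarith [Real.pi_pos])
  have hclt : Real.cos r < 1 := by
    have := Real.cos_lt_cos_of_nonneg_of_le_pi (le_refl 0) (by linarith [Real.pi_pos]) h0
    simpa [Real.cos_zero] using this
  have hu1 : Real.cos r ^ ((2:ℝ)/3) < 1 :=
    Real.rpow_lt_one hc.le hclt (by norm_num)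
  have hF := Faux_hasDerivAt hu1
  have hderivu : HasDerivAt (fun x => Real.cos x ^ ((2:ℝ)/3))
      (-Real.sin r * ((2:ℝ)/3) * Real.cos r ^ ((2:ℝ)/3 - 1)) r :=
    (Real.hasDerivAt_cos r).rpow_const (Or.inl hc.ne')
  have hcomp := (hF.comp r hderivu).const_mul c₁
  have heq : (fun x => c₁ * Faux (Real.cos x ^ ((2:ℝ)/3))) =ᶠ[nhds r] η := by
    have hmem : {x : ℝ | 0 < Real.cos x} ∈ nhds r :=
      (isOpen_lt continuous_const Real.continuous_cos).mem_nhds hc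
    filter_upwards [hmem] with x hx
    exact (eta_eq hx).symm
  have hη := hcomp.congr_of_eventuallyEq heq.symm
  refine hη.congr_deriv ?_
  have hu3 : (Real.cos r ^ ((2:ℝ)/3))^3 = Real.cos r ^ 2 := by
    rw [← Real.rpow_natCast (Real.cos r ^ ((2:ℝ)/3)) 3, ← Real.rpow_mul hc.le]
    norm_num
  have hs2 : 1 - Real.cos r ^ 2 = Real.sin r ^ 2 := by
    have := Real.sin_sq_add_cos_sq r; linarith
  have hcr : Real.cos r ^ ((2:ℝ)/3 - 1) = (Real.cos r ^ ((1:ℝ)/3))⁻¹ := by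
    rw [show (2:ℝ)/3 - 1 = -(1/3) by norm_num, Real.rpow_neg hc.le]
  have hpos : (0:ℝ) < Real.cos r ^ ((1:ℝ)/3) := Real.rpow_pos_of_pos hc _
  rw [eta_eq hc, hu3, hs2, hcr]
  field_simp

lemma eta_value : η (Real.pi/2) = (3:ℝ)^((3:ℝ)/4) * Real.exp (Real.pi/(4*Real.sqrt 3)) := by
  have h0 : (0:ℝ) ^ ((2:ℝ)/3) = 0 := Real.zero_rpow (by norm_num)
  have h0' : (0:ℝ) ^ ((4:ℝ)/3) = 0 := Real.zero_rpow (by norm_num)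
  have harctan : Real.arctan (1/Real.sqrt 3) = Real.pi/6 := by
    rw [← Real.tan_pi_div_six]
    exact Real.arctan_tan (by linarith [Real.pi_pos]) (by linarith [Real.pi_pos])
  simp only [η, Real.cos_pi_div_two, h0, h0', c₁]
  norm_num
  rw [one_div] at harctan
  rw [mul_assoc, ← Real.exp_add]
  congr 2
  have hs : Real.sqrt 3 * Real.sqrt 3 = 3 := Real.mul_self_sqrt (by norm_num)
  have hs0 : Real.sqrt 3 ≠ 0 := by positivity
  field_simp
  linear_combination (-4) * hs

lemma eta_contAt : ContinuousAt η (Real.pi/2) := by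
  have hu : ContinuousAt (fun x => Real.cos x ^ ((2:ℝ)/3)) (Real.pi/2) :=
    (Real.continuous_cos.continuousAt).rpow_const (Or.inr (by norm_num))
  have hu4 : ContinuousAt (fun x => Real.cos x ^ ((4:ℝ)/3)) (Real.pi/2) :=
    (Real.continuous_cos.continuousAt).rpow_const (Or.inr (by norm_num))
  have h0 : (0:ℝ) ^ ((2:ℝ)/3) = 0 := Real.zero_rpow (by norm_num)
  have h0' : (0:ℝ) ^ ((4:ℝ)/3) = 0 := Real.zero_rpow (by norm_num)
  have hA : ContinuousAt (fun x => (1 - Real.cos x ^ ((2:ℝ)/3)) ^ ((1:ℝ)/2)) (Real.pi/2) :=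
    (continuousAt_const.sub hu).rpow_const (Or.inr (by norm_num))
  have hB : ContinuousAt (fun x =>
      (Real.cos x ^ ((2:ℝ)/3) + Real.cos x ^ ((4:ℝ)/3) + 1) ^ (-(1:ℝ)/4)) (Real.pi/2) := by
    refine ((hu.add hu4).add continuousAt_const).rpow_const (Or.inl ?_)
    simp [Real.cos_pi_div_two, h0, h0']
  have hC : ContinuousAt (fun x => Real.exp (-(Real.sqrt 3 / 2)
      * Real.arctan ((2 * Real.cos x ^ ((2:ℝ)/3) + 1) / Real.sqrt 3))) (Real.pi/2) := by
    apply Real.continuous_exp.continuousAt.comp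
    exact (continuousAt_const.mul ((Real.continuous_arctan.continuousAt).comp
      (((continuousAt_const.mul hu).add continuousAt_const).div_const _)))
  exact ((continuousAt_const.mul hA).mul hB).mul hC

lemma eta_tendsto : Filter.Tendsto η (nhdsWithin (Real.pi/2) (Set.Iio (Real.pi/2)))
    (nhds ((3:ℝ)^((3:ℝ)/4) * Real.exp (Real.pi/(4*Real.sqrt 3)))) := by
  have h : Filter.Tendsto η (nhdsWithin (Real.pi/2) (Set.Iio (Real.pi/2)))
      (nhds (η (Real.pi/2))) := eta_contAt.tendsto.mono_left nhdsWithin_le_nhds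
  rwa [eta_value] at h

lemma ratio_tendsto : Filter.Tendsto (fun r => (Real.pi/2 - r)/Real.cos r)
    (nhdsWithin (Real.pi/2) (Set.Iio (Real.pi/2))) (nhds 1) := by
  have hsin : Filter.Tendsto (fun y => Real.sin y / y) (nhdsWithin 0 {0}ᶜ) (nhds 1) := by
    have h := Real.hasDerivAt_sin 0
    rw [hasDerivAt_iff_tendsto_slope] at h
    simpa [slope_fun_def, Real.sin_zero, Real.cos_zero, div_eq_inv_mul] using h
  have hinv : Filter.Tendsto (fun y => y / Real.sin y) (nhdsWithin 0 {0}ᶜ) (nhds 1) := by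
    have := hsin.inv₀ one_ne_zero
    simpa [inv_div] using this
  have hmap : Filter.Tendsto (fun r => Real.pi/2 - r)
      (nhdsWithin (Real.pi/2) (Set.Iio (Real.pi/2))) (nhdsWithin 0 {0}ᶜ) := by
    apply tendsto_nhdsWithin_of_tendsto_nhds_of_eventually_within
    · have h : Filter.Tendsto (fun r : ℝ => Real.pi/2 - r) (nhds (Real.pi/2))
          (nhds (Real.pi/2 - Real.pi/2)) := tendsto_const_nhds.sub Filter.tendsto_id
      simpa using h.mono_left nhdsWithin_le_nhds
    · filter_upwards [eventually_mem_nhdsWithin] with r hr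
      simp only [Set.mem_compl_iff, Set.mem_singleton_iff]
      have : r < Real.pi/2 := hr
      intro h; linarith [sub_eq_zero.mp h]
  have := hinv.comp hmap
  simp only [Function.comp_def] at this
  refine this.congr (fun r => ?_)
  rw [Real.sin_pi_div_two_sub]

/-- Boundary asymptotics of `ψ = η'` at `r = π/2`:
`(π/2 − r)^(1/3) η'(r) → 3^(3/4) e^(π/(4√3))`, so `η'(r) → ∞` as `r → (π/2)⁻`. -/
theorem stmt_10 :
    Filter.Tendsto (fun r => (Real.pi / 2 - r) ^ ((1 : ℝ) / 3) * deriv η r)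
      (nhdsWithin (Real.pi / 2) (Set.Iio (Real.pi / 2)))
      (nhds ((3 : ℝ) ^ ((3 : ℝ) / 4) * Real.exp (Real.pi / (4 * Real.sqrt 3)))) ∧
    Filter.Tendsto (fun r => deriv η r)
      (nhdsWithin (Real.pi / 2) (Set.Iio (Real.pi / 2))) Filter.atTop := by
  have hpi : (0:ℝ) < Real.pi/2 := by linarith [Real.pi_pos]
  have hmem : ∀ᶠ r in nhdsWithin (Real.pi/2) (Set.Iio (Real.pi/2)),
      r ∈ Set.Ioo 0 (Real.pi/2) := by
    filter_upwards [eventually_mem_nhdsWithin,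
      nhdsWithin_le_nhds (Ioi_mem_nhds hpi)] with r h1 h2
    exact ⟨h2, h1⟩
  have hderiv : ∀ᶠ r in nhdsWithin (Real.pi/2) (Set.Iio (Real.pi/2)),
      deriv η r = η r / (Real.sin r * Real.cos r ^ ((1:ℝ)/3)) := by
    filter_upwards [hmem] with r hr
    exact (eta_hasDerivAt hr.1 hr.2).deriv
  constructor
  · have hsin1 : Filter.Tendsto (fun r => (Real.sin r)⁻¹)
        (nhdsWithin (Real.pi/2) (Set.Iio (Real.pi/2))) (nhds 1) := by
      have h : Filter.Tendsto Real.sin (nhdsWithin (Real.pi/2) (Set.Iio (Real.pi/2)))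
          (nhds (Real.sin (Real.pi/2))) :=
        Real.continuous_sin.continuousAt.tendsto.mono_left nhdsWithin_le_nhds
      rw [Real.sin_pi_div_two] at h
      simpa using h.inv₀ one_ne_zero
    have hpow : Filter.Tendsto (fun r => ((Real.pi/2 - r)/Real.cos r) ^ ((1:ℝ)/3))
        (nhdsWithin (Real.pi/2) (Set.Iio (Real.pi/2))) (nhds 1) := by
      have hc := (Real.continuousAt_rpow_const 1 ((1:ℝ)/3)
        (Or.inl one_ne_zero)).tendsto.comp ratio_tendsto
      simpa [Function.comp_def, Real.one_rpow] using hc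
    have htot := (eta_tendsto.mul hpow).mul hsin1
    rw [mul_one, mul_one] at htot
    refine htot.congr' ?_
    filter_upwards [hmem, hderiv] with r hr hd
    obtain ⟨hr1, hr2⟩ := hr
    have hc : 0 < Real.cos r := Real.cos_pos_of_mem_Ioo ⟨by linarith [Real.pi_pos], hr2⟩
    have hsin : 0 < Real.sin r := Real.sin_pos_of_pos_of_lt_pi hr1 (by linarith [Real.pi_pos])
    have hpos : (0:ℝ) < Real.cos r ^ ((1:ℝ)/3) := Real.rpow_pos_of_pos hc _
    rw [hd, Real.div_rpow (by linarith) hc.le]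
    field_simp
  · have hden : Filter.Tendsto (fun r => Real.sin r * Real.cos r ^ ((1:ℝ)/3))
        (nhdsWithin (Real.pi/2) (Set.Iio (Real.pi/2))) (nhdsWithin 0 (Set.Ioi 0)) := by
      apply tendsto_nhdsWithin_of_tendsto_nhds_of_eventually_within
      · have h1 : ContinuousAt (fun r => Real.sin r * Real.cos r ^ ((1:ℝ)/3)) (Real.pi/2) :=
          Real.continuous_sin.continuousAt.mul
            ((Real.continuous_cos.continuousAt).rpow_const (Or.inr (by norm_num)))
        have h2 := h1.tendsto.mono_left
          (nhdsWithin_le_nhds (s := Set.Iio (Real.pi/2)))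
        simpa [Real.cos_pi_div_two, Real.zero_rpow, (by norm_num : ((1:ℝ)/3) ≠ 0)] using h2
      · filter_upwards [hmem] with r hr
        obtain ⟨hr1, hr2⟩ := hr
        have hc : 0 < Real.cos r := Real.cos_pos_of_mem_Ioo ⟨by linarith [Real.pi_pos], hr2⟩
        have hsin : 0 < Real.sin r :=
          Real.sin_pos_of_pos_of_lt_pi hr1 (by linarith [Real.pi_pos])
        exact mul_pos hsin (Real.rpow_pos_of_pos hc _)
    have hL : (0:ℝ) < (3:ℝ)^((3:ℝ)/4) * Real.exp (Real.pi/(4*Real.sqrt 3)) := by positivity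
    have htop := Filter.Tendsto.pos_mul_atTop hL eta_tendsto hden.inv_tendsto_nhdsGT_zero
    refine htop.congr' ?_
    filter_upwards [hderiv] with r hd
    rw [hd, div_eq_mul_inv]
    rfl
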